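/- arXiv:1709.10334 — 2 statements merged into one kernel-verified Lean document; each statement's English description precedes it below -/
import Mathlib

section
/- Let F be a field, λ ∈ F with λ ≠ 0 and λ ≠ −1, n ≥ 1, and let X, Y be n×n matrices over F. Then the matrix M_1(λI_{5n} + J) + M_2(K_{X,Y}) is nonsingular. -/
/-- The `5n × 5n` matrix `J`, partitioned into `n × n` blocks, with identity
blocks in block positions `(1,2)`, `(2,3)`, `(3,4)` (1-indexed) and zero blocks
elsewhere.  Rows and columns are indexed by `Fin 5 × Fin n`, the first
component being the block index. -/
def Jmat (F : Type*) [Field F] (n : ℕ) :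
    Matrix (Fin 5 × Fin n) (Fin 5 × Fin n) F :=
  Matrix.of fun p q =>
    if (p.1 = 0 ∧ q.1 = 1) ∨ (p.1 = 1 ∧ q.1 = 2) ∨ (p.1 = 2 ∧ q.1 = 3) then
      (1 : Matrix (Fin n) (Fin n) F) p.2 q.2
    else 0

/-- The `5n × 5n` matrix `K_{X,Y}`, partitioned into `n × n` blocks, with the
block `X` in block positions `(1,3)` and `(2,4)`, the block `Y` in position
`(1,5)`, the identity block in position `(5,4)`, and zero blocks elsewhere. -/
def Kmat {F : Type*} [Field F] {n : ℕ} (X Y : Matrix (Fin n) (Fin n) F) :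
    Matrix (Fin 5 × Fin n) (Fin 5 × Fin n) F :=
  Matrix.of fun p q =>
    if (p.1 = 0 ∧ q.1 = 2) ∨ (p.1 = 1 ∧ q.1 = 3) then X p.2 q.2
    else if p.1 = 0 ∧ q.1 = 4 then Y p.2 q.2
    else if p.1 = 4 ∧ q.1 = 3 then (1 : Matrix (Fin n) (Fin n) F) p.2 q.2
    else 0

/-- Index type for the block-diagonal `(7m+6) × (7m+6)` matrices `M₁(A)` and
`M₂(B)`, where the `m × m` matrices `A, B` are indexed by an arbitrary type
`ι` with `m` elements. -/
abbrev MIdx (m : ℕ) (ι : Type) : Type := Fin (2*m+2) ⊕ (Fin (3*m+3) ⊕ (Fin (m+1) ⊕ ι))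

/-- `M₁(A) := I_{2m+2} ⊕ 0_{3m+3} ⊕ I_{m+1} ⊕ A`, a `(7m+6) × (7m+6)` matrix. -/
def M1 {F : Type*} [Field F] (m : ℕ) {ι : Type} [Fintype ι] [DecidableEq ι]
    (A : Matrix ι ι F) : Matrix (MIdx m ι) (MIdx m ι) F :=
  Matrix.fromBlocks 1 0 0
    (Matrix.fromBlocks 0 0 0
      (Matrix.fromBlocks 1 0 0 A))

/-- `M₂(B) := 0_{2m+2} ⊕ I_{3m+3} ⊕ λI_{m+1} ⊕ B`, a `(7m+6) × (7m+6)` matrix. -/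
def M2 {F : Type*} [Field F] (m : ℕ) {ι : Type} [Fintype ι] [DecidableEq ι]
    (l : F) (B : Matrix ι ι F) : Matrix (MIdx m ι) (MIdx m ι) F :=
  Matrix.fromBlocks 0 0 0
    (Matrix.fromBlocks 1 0 0
      (Matrix.fromBlocks (l • (1 : Matrix (Fin (m+1)) (Fin (m+1)) F)) 0 0 B))

lemma pow_apply_eq_zero_of_weight {F : Type*} [Field F] {α : Type*} [Fintype α] [DecidableEq α]
    (N : Matrix α α F) (w : α → ℕ) (h : ∀ p q, w q ≤ w p → N p q = 0) :
    ∀ k p q, w q < w p + k → (N ^ k) p q = 0 := by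
  intro k
  induction k with
  | zero =>
    intro p q hk
    simp only [Nat.add_zero] at hk
    rw [pow_zero]
    exact Matrix.one_apply_ne' (fun he => absurd (he ▸ hk) (lt_irrefl _))
  | succ k ih =>
    intro p q hk
    rw [pow_succ', Matrix.mul_apply]
    refine Finset.sum_eq_zero fun r _ => ?_
    by_cases hr : w r ≤ w p
    · rw [h p r hr, zero_mul]
    · rw [ih r q (by omega), mul_zero]

/-- For `λ ∈ F` with `λ ≠ 0` and `λ ≠ -1`, and any `n × n` matrices `X, Y`,
the matrix `M₁(λI_{5n} + J) + M₂(K_{X,Y})` (of size `(7·5n+6) × (7·5n+6)`)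
is nonsingular. -/
theorem M1_add_M2_isUnit (F : Type*) [Field F] (l : F) (hl0 : l ≠ 0)
    (hl1 : l ≠ -1) (n : ℕ) (hn : 1 ≤ n) (X Y : Matrix (Fin n) (Fin n) F) :
    IsUnit (M1 (5*n) (l • (1 : Matrix (Fin 5 × Fin n) (Fin 5 × Fin n) F) + Jmat F n)
      + M2 (5*n) l (Kmat X Y)) := by
  have hl1' : 1 + l ≠ 0 := fun h => hl1 (by linear_combination h)
  have hM : M1 (5*n) (l • (1 : Matrix (Fin 5 × Fin n) (Fin 5 × Fin n) F) + Jmat F n)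
      + M2 (5*n) l (Kmat X Y) =
      Matrix.fromBlocks 1 0 0 (Matrix.fromBlocks 1 0 0 (Matrix.fromBlocks
        ((1 + l) • (1 : Matrix (Fin (5*n+1)) (Fin (5*n+1)) F)) 0 0
        (l • 1 + (Jmat F n + Kmat X Y)))) := by
    simp [M1, M2, Matrix.fromBlocks_add, add_smul, add_assoc]
  have hnil : IsNilpotent (Jmat F n + Kmat X Y) := by
    refine ⟨4, ?_⟩
    ext p q
    refine pow_apply_eq_zero_of_weight _
      (fun p => if p.1.val = 4 then 1 else p.1.val) ?_ 4 p q ?_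
    · rintro ⟨a, i⟩ ⟨b, j⟩ hle
      simp only at hle
      simp only [Jmat, Kmat, Matrix.add_apply, Matrix.of_apply]
      have ha : a.val < 5 := a.isLt
      have hb : b.val < 5 := b.isLt
      split_ifs at hle ⊢ <;> simp only [Fin.ext_iff] at * <;> simp_all <;> omega
    · have := p.1.isLt
      have := q.1.isLt
      split_ifs <;> omega
  have hunit : IsUnit (l • (1 : Matrix (Fin 5 × Fin n) (Fin 5 × Fin n) F)
      + (Jmat F n + Kmat X Y)) := by
    refine hnil.isUnit_add_left_of_commute ?_ ?_
    · rw [Matrix.isUnit_iff_isUnit_det, Matrix.det_smul, Matrix.det_one, mul_one]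
      exact (isUnit_iff_ne_zero.mpr hl0).pow _
    · exact (Commute.one_right (Jmat F n + Kmat X Y)).smul_right l
  rw [hM, Matrix.isUnit_iff_isUnit_det, Matrix.det_fromBlocks_zero₂₁,
    Matrix.det_fromBlocks_zero₂₁, Matrix.det_fromBlocks_zero₂₁, Matrix.det_smul]
  simp only [Matrix.det_one, one_mul, mul_one]
  exact ((isUnit_iff_ne_zero.mpr hl1').pow _).mul
    ((Matrix.isUnit_iff_isUnit_det _).mp hunit)
end

section
/- Let F be a field with at least 3 elements, let λ ∈ F with λ ≠ 0 and λ ≠ −1, let n ≥ 1, and let (X,Y) and (X',Y') be pairs of n×n matrices over F. Then (X,Y) and (X',Y') are similar if and only if the pairs (M_1(λI_{5n}+J), M_2(K_{X,Y})) and (M_1(λI_{5n}+J), M_2(K_{X',Y'})) are weakly similar. Moreover, M_1(λI_{5n}+J) and M_2(K_{X,Y}) commute. -/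
/-- Two pairs `(A, B)` and `(A', B')` of square matrices of the same size are
*weakly similar* if there are a nonsingular matrix `S` and a nonsingular
`2 × 2` matrix `[[α, β], [γ, δ]]` with `S⁻¹(αA + βB)S = A'` and
`S⁻¹(γA + δB)S = B'`. -/
def WeaklySimilar {F : Type*} [Field F] {N : Type*} [Fintype N] [DecidableEq N]
    (A B A' B' : Matrix N N F) : Prop :=
  ∃ (S : Matrix N N F) (α β γ δ : F),
    IsUnit S ∧ IsUnit !![α, β; γ, δ] ∧
    S⁻¹ * (α • A + β • B) * S = A' ∧ S⁻¹ * (γ • A + δ • B) * S = B'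


set_option linter.unusedSectionVars false
set_option maxHeartbeats 1000000

open Matrix Polynomial Finset

namespace WSaux

variable {F : Type*} [Field F] {n : ℕ}

def bmat (f : Fin 5 → Fin 5 → Matrix (Fin n) (Fin n) F) :
    Matrix (Fin 5 × Fin n) (Fin 5 × Fin n) F :=
  Matrix.of fun p q => f p.1 q.1 p.2 q.2

lemma bmat_apply (f : Fin 5 → Fin 5 → Matrix (Fin n) (Fin n) F) (p q) :
    bmat f p q = f p.1 q.1 p.2 q.2 := rfl

lemma bmat_mul (f g : Fin 5 → Fin 5 → Matrix (Fin n) (Fin n) F) :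
    bmat f * bmat g = bmat fun r s => ∑ t, f r t * g t s := by
  ext p q
  simp only [Matrix.mul_apply, bmat_apply, Fintype.sum_prod_type, Matrix.sum_apply]

lemma bmat_ext {f g : Fin 5 → Fin 5 → Matrix (Fin n) (Fin n) F}
    (h : ∀ r s, f r s = g r s) : bmat f = bmat g := by
  ext p q; rw [bmat_apply, bmat_apply, h]

lemma bmat_eq_iff {f g : Fin 5 → Fin 5 → Matrix (Fin n) (Fin n) F} :
    bmat f = bmat g ↔ ∀ r s, f r s = g r s := by
  constructor
  · intro h r s
    ext i j
    have := congrFun (congrFun h (r, i)) (s, j)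
    simpa [bmat_apply] using this
  · exact bmat_ext

def Jb : Fin 5 → Fin 5 → Matrix (Fin n) (Fin n) F := fun r s =>
  if (r = 0 ∧ s = 1) ∨ (r = 1 ∧ s = 2) ∨ (r = 2 ∧ s = 3) then 1 else 0

def Kb (X Y : Matrix (Fin n) (Fin n) F) : Fin 5 → Fin 5 → Matrix (Fin n) (Fin n) F :=
  fun r s =>
  if (r = 0 ∧ s = 2) ∨ (r = 1 ∧ s = 3) then X
  else if r = 0 ∧ s = 4 then Y
  else if r = 4 ∧ s = 3 then 1
  else 0

lemma Jmat_eq : Jmat F n = bmat Jb := by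
  ext p q
  simp only [Jmat, Matrix.of_apply, bmat_apply, Jb]
  by_cases h : (p.1 = 0 ∧ q.1 = 1) ∨ (p.1 = 1 ∧ q.1 = 2) ∨ (p.1 = 2 ∧ q.1 = 3) <;>
    simp [h]

lemma Kmat_eq (X Y : Matrix (Fin n) (Fin n) F) : Kmat X Y = bmat (Kb X Y) := by
  ext p q
  simp only [Kmat, Matrix.of_apply, bmat_apply, Kb]
  by_cases h1 : (p.1 = 0 ∧ q.1 = 2) ∨ (p.1 = 1 ∧ q.1 = 3)
  · simp [h1]
  · by_cases h2 : p.1 = 0 ∧ q.1 = 4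
    · simp [h1, h2]
    · by_cases h3 : p.1 = 4 ∧ q.1 = 3 <;> simp [h1, h2, h3]

lemma JK_comm (X Y : Matrix (Fin n) (Fin n) F) :
    Jmat F n * Kmat X Y = Kmat X Y * Jmat F n := by
  rw [Jmat_eq, Kmat_eq, bmat_mul, bmat_mul]
  apply bmat_ext
  intro r s
  fin_cases r <;> fin_cases s <;>
    simp [Jb, Kb, Fin.sum_univ_five]


lemma charpoly_smul_one {κ : Type*} [Fintype κ] [DecidableEq κ] (c : F) :
    (c • (1 : Matrix κ κ F)).charpoly = (X - C c) ^ Fintype.card κ := by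
  have h : charmatrix (c • (1 : Matrix κ κ F)) = (X - C c) • (1 : Matrix κ κ F[X]) := by
    ext i j
    by_cases hij : i = j <;>
      simp [charmatrix_apply, hij, Matrix.one_apply, Matrix.diagonal_apply,
        Matrix.smul_apply, sub_eq_zero]
  rw [Matrix.charpoly, h, Matrix.det_smul, Matrix.det_one, mul_one]

lemma charpoly_conj {κ : Type*} [Fintype κ] [DecidableEq κ]
    (S A : Matrix κ κ F) (hS : IsUnit S) :
    (S⁻¹ * A * S).charpoly = A.charpoly := by
  have hd : IsUnit S.det := S.isUnit_iff_isUnit_det.mp hS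
  have hinv : S⁻¹ * S = 1 := Matrix.nonsing_inv_mul _ hd
  have hP : (S⁻¹).map (Polynomial.C (R := F)) * S.map Polynomial.C = 1 := by
    rw [← Matrix.map_mul, hinv, Matrix.map_one _ (map_zero _) (map_one _)]
  have key : charmatrix (S⁻¹ * A * S) =
      (S⁻¹).map Polynomial.C * charmatrix A * S.map Polynomial.C := by
    unfold charmatrix
    simp only [RingHom.mapMatrix_apply]
    rw [mul_sub, sub_mul, Matrix.map_mul, Matrix.map_mul]
    congr 1
    rw [((Matrix.scalar_commute (X : F[X]) (fun r => Commute.all _ r)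
      ((S⁻¹).map Polynomial.C))).symm.eq, mul_assoc, hP, mul_one]
  have hdet := congrArg Matrix.det key
  rw [Matrix.det_mul, Matrix.det_mul] at hdet
  rw [Matrix.charpoly, hdet, mul_comm (((S⁻¹).map Polynomial.C).det) _, mul_assoc,
    ← Matrix.det_mul, hP, Matrix.det_one, mul_one, Matrix.charpoly]

namespace Tri

def wt : Fin 5 → ℕ := ![0, 2, 3, 4, 1]

lemma wt_inj : Function.Injective wt := by decide

end Tri

open Tri in
lemma charpoly_smul_one_add (c : F) (N : Matrix (Fin 5 × Fin n) (Fin 5 × Fin n) F)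
    (hN : ∀ p q : Fin 5 × Fin n, ¬ wt p.1 < wt q.1 → N p q = 0) :
    (c • 1 + N).charpoly = (X - C c) ^ (5 * n) := by
  classical
  set b : Fin 5 × Fin n → ℕ := fun p => wt p.1 with hb
  have hBT : (c • 1 + N).BlockTriangular b := by
    intro i j hji
    have hij : i ≠ j := by rintro rfl; exact lt_irrefl _ hji
    have h1 : (1 : Matrix (Fin 5 × Fin n) (Fin 5 × Fin n) F) i j = 0 :=
      Matrix.one_apply_ne hij
    have h2 : N i j = 0 := hN i j (not_lt.mpr hji.le)
    simp [Matrix.add_apply, Matrix.smul_apply, h1, h2]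
  rw [hBT.charpoly]
  have hblock : ∀ a ∈ Finset.image b Finset.univ,
      ((c • 1 + N).toSquareBlock b a).charpoly
        = (X - C c) ^ Fintype.card {p : Fin 5 × Fin n // b p = a} := by
    intro a _
    have hsq : (c • 1 + N).toSquareBlock b a = c • (1 : Matrix {p // b p = a} {p // b p = a} F) := by
      ext ⟨p, hp⟩ ⟨q, hq⟩
      have hp' : wt p.1 = a := hp
      have hq' : wt q.1 = a := hq
      by_cases hpq : p = q
      · subst hpq
        have hNpp : N p p = 0 := hN p p (by exact lt_irrefl _)
        show (c • 1 + N) p p = (c • (1 : Matrix {p // b p = a} {p // b p = a} F)) ⟨p, hp⟩ ⟨p, hq⟩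
        simp [Matrix.add_apply, Matrix.smul_apply, Matrix.one_apply, hNpp]
      · have hNpq : N p q = 0 := hN p q (by rw [hp', hq']; exact lt_irrefl _)
        have hne : (⟨p, hp⟩ : {p // b p = a}) ≠ ⟨q, hq⟩ := by
          simp [Subtype.ext_iff, hpq]
        show (c • 1 + N) p q = (c • (1 : Matrix {p // b p = a} {p // b p = a} F)) ⟨p, hp⟩ ⟨q, hq⟩
        simp [Matrix.add_apply, Matrix.smul_apply, Matrix.one_apply_ne hpq, hNpq,
          Matrix.one_apply_ne hne]
    rw [hsq]
    exact charpoly_smul_one c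
  rw [Finset.prod_congr rfl hblock, Finset.prod_pow_eq_pow_sum]
  congr 1
  have hcards : ∀ a, Fintype.card {p : Fin 5 × Fin n // b p = a}
      = (Finset.univ.filter (fun p : Fin 5 × Fin n => b p = a)).card := by
    intro a; exact Fintype.card_subtype _
  calc ∑ a ∈ Finset.image b Finset.univ, Fintype.card {p : Fin 5 × Fin n // b p = a}
      = ∑ a ∈ Finset.image b Finset.univ,
          (Finset.univ.filter (fun p : Fin 5 × Fin n => b p = a)).card :=
        Finset.sum_congr rfl fun a _ => hcards a
    _ = (Finset.univ : Finset (Fin 5 × Fin n)).card :=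
        (Finset.card_eq_sum_card_fiberwise (fun x _ => Finset.mem_image_of_mem b
          (Finset.mem_univ x))).symm
    _ = 5 * n := by simp [Finset.card_univ]

noncomputable def ind (c a : F) : ℕ := @ite _ (c = a) (Classical.dec _) 1 0

lemma rm_pow (c a : F) (k : ℕ) :
    Polynomial.rootMultiplicity c ((X - C a) ^ k) = k * ind c a := by
  by_cases h : c = a
  · subst h; rw [Polynomial.rootMultiplicity_X_sub_C_pow, ind, if_pos rfl, mul_one]
  · rw [ind, if_neg h, mul_zero]
    apply Polynomial.rootMultiplicity_eq_zero
    simp [Polynomial.IsRoot, sub_eq_zero, h]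

lemma pow_ne (a : F) (k : ℕ) : (X - C a) ^ k ≠ 0 :=
  pow_ne_zero _ (Polynomial.X_sub_C_ne_zero a)

lemma rm_prod4 (a1 a2 a3 a4 : F) (k1 k2 k3 k4 : ℕ) (c : F) :
    Polynomial.rootMultiplicity c
        ((X - C a1) ^ k1 * (X - C a2) ^ k2 * (X - C a3) ^ k3 * (X - C a4) ^ k4)
      = k1 * ind c a1 + k2 * ind c a2 + k3 * ind c a3 + k4 * ind c a4 := by
  rw [Polynomial.rootMultiplicity_mul
      (mul_ne_zero (mul_ne_zero (mul_ne_zero (pow_ne a1 k1) (pow_ne a2 k2)) (pow_ne a3 k3)) (pow_ne a4 k4)),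
    Polynomial.rootMultiplicity_mul
      (mul_ne_zero (mul_ne_zero (pow_ne a1 k1) (pow_ne a2 k2)) (pow_ne a3 k3)),
    Polynomial.rootMultiplicity_mul (mul_ne_zero (pow_ne a1 k1) (pow_ne a2 k2)),
    rm_pow, rm_pow, rm_pow, rm_pow]

lemma key1 (m : ℕ) (l a b : F) (hl0 : l ≠ 0) (hab : ¬ (a = 0 ∧ b = 0))
    (h : ∀ c : F, (2*m+2) * ind c a + (3*m+3) * ind c b + (m+1) * ind c (a + b*l)
        + m * ind c (a*l)
      = (2*m+2) * ind c 1 + (3*m+3) * ind c 0 + (m+1) * ind c 1 + m * ind c l) :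
    a = 1 ∧ b = 0 := by
  have hA : a = 0 ∨ a = 1 := by
    by_contra hcon
    push_neg at hcon
    obtain ⟨h0, h1⟩ := hcon
    have := h a
    simp only [ind, if_pos rfl, if_neg h0, if_neg h1] at this
    split_ifs at this <;> omega
  have hB : b = 0 ∨ b = 1 := by
    by_contra hcon
    push_neg at hcon
    obtain ⟨h0, h1⟩ := hcon
    have := h b
    simp only [ind, if_pos rfl, if_neg h0, if_neg h1] at this
    split_ifs at this <;> omega
  rcases hA with rfl | rfl
  · rcases hB with rfl | rfl
    · exact absurd ⟨rfl, rfl⟩ hab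
    · exfalso
      simp only [zero_add, one_mul, zero_mul] at h
      have := h 0
      simp only [ind, if_pos rfl, if_neg (zero_ne_one (α := F)),
        if_neg (Ne.symm hl0)] at this
      split_ifs at this <;> omega
  · rcases hB with rfl | rfl
    · exact ⟨rfl, rfl⟩
    · exfalso
      simp only [one_mul] at h
      have h1l : ¬ ((1 : F) = 1 + l) := by
        simp only [left_eq_add]; exact hl0
      have := h 1
      simp only [ind, if_pos rfl, if_neg h1l, if_neg (one_ne_zero (α := F))] at this
      split_ifs at this <;> omega

lemma key2 (m : ℕ) (l g d : F) (hl0 : l ≠ 0)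
    (h : ∀ c : F, (2*m+2) * ind c g + (3*m+3) * ind c d + (m+1) * ind c (g + d*l)
        + m * ind c (g*l)
      = (2*m+2) * ind c 0 + (3*m+3) * ind c 1 + (m+1) * ind c l + m * ind c 0) :
    g = 0 ∧ d = 1 := by
  have hD : d = 1 := by
    by_cases hd0 : d = 0
    · exfalso
      subst hd0
      simp only [zero_mul, add_zero] at h
      have := h 0
      simp only [ind, if_pos rfl, if_neg (zero_ne_one (α := F)),
        if_neg (Ne.symm hl0)] at this
      split_ifs at this <;> omega
    · by_contra hd1
      have := h d
      simp only [ind, if_pos rfl, if_neg hd0, if_neg hd1] at this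
      split_ifs at this <;> omega
  subst hD
  have hG : g = 0 := by
    by_cases hg1 : g = 1
    · exfalso
      subst hg1
      simp only [one_mul] at h
      have h1l : ¬ ((1 : F) = 1 + l) := by
        simp only [left_eq_add]; exact hl0
      have := h 1
      simp only [ind, if_pos rfl, if_neg (one_ne_zero (α := F)), if_neg h1l] at this
      split_ifs at this <;> omega
    · by_contra hg0
      simp only [one_mul] at h
      have := h g
      simp only [ind, if_pos rfl, if_neg hg0, if_neg hg1] at this
      split_ifs at this <;> omega
  exact ⟨hG, rfl⟩


open Tri in
lemma Jmat_wt (p q : Fin 5 × Fin n) (hw : ¬ wt p.1 < wt q.1) : Jmat F n p q = 0 := by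
  simp only [Jmat, Matrix.of_apply]
  split_ifs with hc
  · exfalso
    rcases hc with ⟨h1, h2⟩ | ⟨h1, h2⟩ | ⟨h1, h2⟩ <;>
      (rw [h1, h2] at hw; exact hw (by decide))
  · rfl

open Tri in
lemma Kmat_wt (U V : Matrix (Fin n) (Fin n) F) (p q : Fin 5 × Fin n)
    (hw : ¬ wt p.1 < wt q.1) : Kmat U V p q = 0 := by
  simp only [Kmat, Matrix.of_apply]
  split_ifs with h1 h2 h3
  · exfalso
    rcases h1 with ⟨h1, h2⟩ | ⟨h1, h2⟩ <;> (rw [h1, h2] at hw; exact hw (by decide))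
  · exfalso; rw [h2.1, h2.2] at hw; exact hw (by decide)
  · exfalso; rw [h3.1, h3.2] at hw; exact hw (by decide)
  · rfl

lemma charpoly_comb (a b lam : F) (U V : Matrix (Fin n) (Fin n) F) :
    (a • M1 (5*n) (lam • (1 : Matrix (Fin 5 × Fin n) (Fin 5 × Fin n) F) + Jmat F n)
      + b • M2 (5*n) lam (Kmat U V)).charpoly
    = (X - C a) ^ (2*(5*n)+2) * (X - C b) ^ (3*(5*n)+3)
      * (X - C (a + b*lam)) ^ ((5*n)+1) * (X - C (a*lam)) ^ (5*n) := by
  have hrw : a • M1 (5*n) (lam • (1 : Matrix (Fin 5 × Fin n) (Fin 5 × Fin n) F) + Jmat F n)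
      + b • M2 (5*n) lam (Kmat U V)
    = Matrix.fromBlocks (a • 1) 0 0
        (Matrix.fromBlocks (b • 1) 0 0
          (Matrix.fromBlocks ((a + b*lam) • 1) 0 0
            ((a*lam) • 1 + (a • Jmat F n + b • Kmat U V)))) := by
    unfold M1 M2
    simp only [Matrix.fromBlocks_smul, Matrix.fromBlocks_add, smul_zero, add_zero,
      zero_add, smul_add, smul_smul, ← add_smul, add_assoc]
  rw [hrw, Matrix.charpoly_fromBlocks_zero₂₁, Matrix.charpoly_fromBlocks_zero₂₁,
    Matrix.charpoly_fromBlocks_zero₂₁, charpoly_smul_one, charpoly_smul_one,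
    charpoly_smul_one,
    charpoly_smul_one_add (a*lam) (a • Jmat F n + b • Kmat U V) (fun p q hw => by
      simp [Matrix.add_apply, Matrix.smul_apply, Jmat_wt p q hw, Kmat_wt U V p q hw]),
    Fintype.card_fin, Fintype.card_fin, Fintype.card_fin]
  ring

lemma zero_bmat : (0 : Matrix (Fin 5 × Fin n) (Fin 5 × Fin n) F) = bmat fun _ _ => 0 := rfl

lemma K_cube (U V : Matrix (Fin n) (Fin n) F) :
    Kmat U V * (Kmat U V * Kmat U V) = 0 := by
  rw [Kmat_eq, bmat_mul, bmat_mul, zero_bmat]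
  apply bmat_ext
  intro r s
  fin_cases r <;> fin_cases s <;>
    simp [Kb, Fin.sum_univ_five]

lemma K_fix (U V : Matrix (Fin n) (Fin n) F) (c : F) (hc : c ≠ 0)
    (g : (Fin 5 × Fin n) → F) (hg : (Kmat U V).mulVec g = c • g) : g = 0 := by
  have e1 : ∀ v : (Fin 5 × Fin n) → F, (Kmat U V).mulVec (c • v) = c • ((Kmat U V).mulVec v) :=
    fun v => Matrix.mulVec_smul _ _ _
  have h3 : (Kmat U V * (Kmat U V * Kmat U V)).mulVec g = (c * (c * c)) • g := by
    calc (Kmat U V * (Kmat U V * Kmat U V)).mulVec g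
        = (Kmat U V).mulVec ((Kmat U V).mulVec ((Kmat U V).mulVec g)) := by
          rw [Matrix.mulVec_mulVec, Matrix.mulVec_mulVec, mul_assoc]
      _ = (c * (c * c)) • g := by
          rw [hg, e1, hg, e1, e1, hg, smul_smul, smul_smul, mul_assoc]
  rw [K_cube, Matrix.zero_mulVec] at h3
  have := h3.symm
  rw [smul_eq_zero] at this
  rcases this with h | h
  · exact absurd h (by simp [hc])
  · exact h

section Extract

variable {m : ℕ}

/-- inclusion of the fourth block. -/
def ι4 (m : ℕ) {n : ℕ} (p : Fin 5 × Fin n) : MIdx m (Fin 5 × Fin n) :=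
  Sum.inr (Sum.inr (Sum.inr p))

lemma M2_row4 (lam : F) (B : Matrix (Fin 5 × Fin n) (Fin 5 × Fin n) F)
    (S : Matrix (MIdx m (Fin 5 × Fin n)) (MIdx m (Fin 5 × Fin n)) F)
    (p : Fin 5 × Fin n) (c : MIdx m (Fin 5 × Fin n)) :
    (M2 m lam B * S) (ι4 m p) c = ∑ q, B p q * S (ι4 m q) c := by
  rw [Matrix.mul_apply]
  rw [Fintype.sum_sum_type, Fintype.sum_sum_type, Fintype.sum_sum_type]
  simp [M2, ι4]

lemma M1_row4 (A : Matrix (Fin 5 × Fin n) (Fin 5 × Fin n) F)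
    (S : Matrix (MIdx m (Fin 5 × Fin n)) (MIdx m (Fin 5 × Fin n)) F)
    (p : Fin 5 × Fin n) (c : MIdx m (Fin 5 × Fin n)) :
    (M1 m A * S) (ι4 m p) c = ∑ q, A p q * S (ι4 m q) c := by
  rw [Matrix.mul_apply]
  rw [Fintype.sum_sum_type, Fintype.sum_sum_type, Fintype.sum_sum_type]
  simp [M1, ι4]

lemma M2_col1 (lam : F) (B : Matrix (Fin 5 × Fin n) (Fin 5 × Fin n) F)
    (S : Matrix (MIdx m (Fin 5 × Fin n)) (MIdx m (Fin 5 × Fin n)) F)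
    (r : MIdx m (Fin 5 × Fin n)) (a : Fin (2*m+2)) :
    (S * M2 m lam B) r (Sum.inl a) = 0 := by
  rw [Matrix.mul_apply]
  rw [Fintype.sum_sum_type, Fintype.sum_sum_type, Fintype.sum_sum_type]
  simp [M2]

lemma M2_col2 (lam : F) (B : Matrix (Fin 5 × Fin n) (Fin 5 × Fin n) F)
    (S : Matrix (MIdx m (Fin 5 × Fin n)) (MIdx m (Fin 5 × Fin n)) F)
    (r : MIdx m (Fin 5 × Fin n)) (b : Fin (3*m+3)) :
    (S * M2 m lam B) r (Sum.inr (Sum.inl b)) = S r (Sum.inr (Sum.inl b)) := by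
  rw [Matrix.mul_apply]
  rw [Fintype.sum_sum_type, Fintype.sum_sum_type, Fintype.sum_sum_type]
  simp [M2, Matrix.one_apply, Finset.sum_ite_eq']

lemma M2_col3 (lam : F) (B : Matrix (Fin 5 × Fin n) (Fin 5 × Fin n) F)
    (S : Matrix (MIdx m (Fin 5 × Fin n)) (MIdx m (Fin 5 × Fin n)) F)
    (r : MIdx m (Fin 5 × Fin n)) (b : Fin (m+1)) :
    (S * M2 m lam B) r (Sum.inr (Sum.inr (Sum.inl b)))
      = lam * S r (Sum.inr (Sum.inr (Sum.inl b))) := by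
  rw [Matrix.mul_apply]
  rw [Fintype.sum_sum_type, Fintype.sum_sum_type, Fintype.sum_sum_type]
  simp [M2, Matrix.one_apply, Matrix.smul_apply, Finset.sum_ite_eq', mul_comm]

lemma M2_col4 (lam : F) (B : Matrix (Fin 5 × Fin n) (Fin 5 × Fin n) F)
    (S : Matrix (MIdx m (Fin 5 × Fin n)) (MIdx m (Fin 5 × Fin n)) F)
    (r : MIdx m (Fin 5 × Fin n)) (q : Fin 5 × Fin n) :
    (S * M2 m lam B) r (ι4 m q) = ∑ t, S r (ι4 m t) * B t q := by
  rw [Matrix.mul_apply]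
  rw [Fintype.sum_sum_type, Fintype.sum_sum_type, Fintype.sum_sum_type]
  simp [M2, ι4]

lemma M1_col4 (A : Matrix (Fin 5 × Fin n) (Fin 5 × Fin n) F)
    (S : Matrix (MIdx m (Fin 5 × Fin n)) (MIdx m (Fin 5 × Fin n)) F)
    (r : MIdx m (Fin 5 × Fin n)) (q : Fin 5 × Fin n) :
    (S * M1 m A) r (ι4 m q) = ∑ t, S r (ι4 m t) * A t q := by
  rw [Matrix.mul_apply]
  rw [Fintype.sum_sum_type, Fintype.sum_sum_type, Fintype.sum_sum_type]
  simp [M1, ι4]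

end Extract

lemma extract {m : ℕ} (lam : F) (hl0 : lam ≠ 0)
    (U V U' V' : Matrix (Fin n) (Fin n) F)
    (S : Matrix (MIdx m (Fin 5 × Fin n)) (MIdx m (Fin 5 × Fin n)) F)
    (hS : IsUnit S)
    (h1 : M1 m (lam • (1 : Matrix (Fin 5 × Fin n) (Fin 5 × Fin n) F) + Jmat F n) * S
        = S * M1 m (lam • (1 : Matrix (Fin 5 × Fin n) (Fin 5 × Fin n) F) + Jmat F n))
    (h2 : M2 m lam (Kmat U V) * S = S * M2 m lam (Kmat U' V'))
    : ∃ W : Matrix (Fin n) (Fin n) F, IsUnit W ∧ W⁻¹ * U * W = U' ∧ W⁻¹ * V * W = V' := by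
  have hdet : IsUnit S.det := S.isUnit_iff_isUnit_det.mp hS
  -- block 2 and block 3 columns of the fourth block-row of S vanish
  have fact2 : ∀ (b : Fin (3*m+3)) (p : Fin 5 × Fin n),
      S (ι4 m p) (Sum.inr (Sum.inl b)) = 0 := by
    intro b
    have hg : (Kmat U V).mulVec (fun p => S (ι4 m p) (Sum.inr (Sum.inl b)))
        = (1 : F) • (fun p => S (ι4 m p) (Sum.inr (Sum.inl b))) := by
      funext p
      have h := congrFun (congrFun h2 (ι4 m p)) (Sum.inr (Sum.inl b))
      rw [M2_row4, M2_col2] at h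
      simpa [Matrix.mulVec, dotProduct] using h
    have := K_fix U V 1 one_ne_zero _ hg
    intro p
    exact congrFun this p
  have fact3 : ∀ (b : Fin (m+1)) (p : Fin 5 × Fin n),
      S (ι4 m p) (Sum.inr (Sum.inr (Sum.inl b))) = 0 := by
    intro b
    have hg : (Kmat U V).mulVec (fun p => S (ι4 m p) (Sum.inr (Sum.inr (Sum.inl b))))
        = lam • (fun p => S (ι4 m p) (Sum.inr (Sum.inr (Sum.inl b)))) := by
      funext p
      have h := congrFun (congrFun h2 (ι4 m p)) (Sum.inr (Sum.inr (Sum.inl b)))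
      rw [M2_row4, M2_col3] at h
      simpa [Matrix.mulVec, dotProduct] using h
    have := K_fix U V lam hl0 _ hg
    intro p
    exact congrFun this p
  -- first block column of the (4,3) block-row of S vanishes
  have fact1 : ∀ (i : Fin n) (a : Fin (2*m+2)),
      S (ι4 m ((3 : Fin 5), i)) (Sum.inl a) = 0 := by
    intro i a
    have h := congrFun (congrFun h2 (ι4 m ((4 : Fin 5), i))) (Sum.inl a)
    rw [M2_row4, M2_col1] at h
    simpa [Kmat, Fintype.sum_prod_type, Fin.sum_univ_five, Matrix.one_apply,
      Finset.sum_ite_eq'] using h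
  -- the (4,4) block of S
  set T : Matrix (Fin 5 × Fin n) (Fin 5 × Fin n) F :=
    Matrix.of (fun p q => S (ι4 m p) (ι4 m q)) with hTdef
  have hTA : (lam • (1 : Matrix (Fin 5 × Fin n) (Fin 5 × Fin n) F) + Jmat F n) * T
      = T * (lam • (1 : Matrix (Fin 5 × Fin n) (Fin 5 × Fin n) F) + Jmat F n) := by
    ext p q
    have h := congrFun (congrFun h1 (ι4 m p)) (ι4 m q)
    rw [M1_row4, M1_col4] at h
    simpa [Matrix.mul_apply, hTdef] using h
  have hTK : Kmat U V * T = T * Kmat U' V' := by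
    ext p q
    have h := congrFun (congrFun h2 (ι4 m p)) (ι4 m q)
    rw [M2_row4, M2_col4] at h
    simpa [Matrix.mul_apply, hTdef] using h
  have hJT : Jmat F n * T = T * Jmat F n := by
    have := hTA
    rw [add_mul, mul_add, Matrix.smul_mul, Matrix.mul_smul, one_mul, mul_one] at this
    exact add_left_cancel this
  -- block structure of T
  set Cb : Fin 5 → Fin 5 → Matrix (Fin n) (Fin n) F :=
    fun r s => Matrix.of (fun i j => T (r, i) (s, j)) with hCbdef
  have hT : T = bmat Cb := by
    ext ⟨r, i⟩ ⟨s, j⟩; rfl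
  have hJC : ∀ r s, ∑ t, (Jb : Fin 5 → Fin 5 → Matrix (Fin n) (Fin n) F) r t * Cb t s
      = ∑ t, Cb r t * Jb t s := by
    have := hJT
    rw [hT, Jmat_eq, bmat_mul, bmat_mul, bmat_eq_iff] at this
    exact this
  have hKC : ∀ r s, ∑ t, Kb U V r t * Cb t s = ∑ t, Cb r t * Kb U' V' t s := by
    have := hTK
    rw [hT, Kmat_eq, Kmat_eq, bmat_mul, bmat_mul, bmat_eq_iff] at this
    exact this
  have c10 : Cb 1 0 = 0 := by have := hJC 0 0; simpa [Jb, Fin.sum_univ_five] using this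
  have c11 : Cb 1 1 = Cb 0 0 := by have := hJC 0 1; simpa [Jb, Fin.sum_univ_five] using this
  have c20 : Cb 2 0 = 0 := by
    have := hJC 1 0; simpa [Jb, Fin.sum_univ_five] using this
  have c21 : Cb 2 1 = 0 := by
    have := hJC 1 1; simpa [Jb, Fin.sum_univ_five, c10] using this
  have c22 : Cb 2 2 = Cb 0 0 := by
    have := hJC 1 2; simpa [Jb, Fin.sum_univ_five, c11] using this
  have c24 : Cb 2 4 = 0 := by
    have := hJC 1 4; simpa [Jb, Fin.sum_univ_five] using this
  have c30 : Cb 3 0 = 0 := by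
    have := hJC 2 0; simpa [Jb, Fin.sum_univ_five] using this
  have c31 : Cb 3 1 = 0 := by
    have := hJC 2 1; simpa [Jb, Fin.sum_univ_five, c20] using this
  have c32 : Cb 3 2 = 0 := by
    have := hJC 2 2; simpa [Jb, Fin.sum_univ_five, c21] using this
  have c33 : Cb 3 3 = Cb 0 0 := by
    have := hJC 2 3; simpa [Jb, Fin.sum_univ_five, c22] using this
  have c34 : Cb 3 4 = 0 := by
    have := hJC 2 4; simpa [Jb, Fin.sum_univ_five] using this
  have c41 : Cb 4 1 = 0 := by
    have := hJC 4 2; simpa [Jb, Fin.sum_univ_five] using this.symm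
  have c42 : Cb 4 2 = 0 := by
    have := hJC 4 3; simpa [Jb, Fin.sum_univ_five] using this.symm
  have c44 : Cb 4 4 = Cb 0 0 := by
    have := hKC 4 3
    simpa [Kb, Fin.sum_univ_five, c41, c33] using this.symm
  have hXC : U * Cb 0 0 = Cb 0 0 * U' := by
    have := hKC 0 2
    simpa [Kb, Fin.sum_univ_five, c22, c42] using this
  have hYC : V * Cb 0 0 = Cb 0 0 * V' := by
    have := hKC 0 4
    simpa [Kb, Fin.sum_univ_five, c24, c44] using this
  -- invertibility of Cb 0 0
  set D : Matrix (Fin n) (Fin n) F :=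
    Matrix.of (fun k j => S⁻¹ (ι4 m ((3 : Fin 5), k)) (ι4 m ((3 : Fin 5), j))) with hDdef
  have hCD : Cb 0 0 * D = 1 := by
    ext i j
    have hSS := Matrix.mul_nonsing_inv S hdet
    have h := congrFun (congrFun hSS (ι4 m ((3 : Fin 5), i))) (ι4 m ((3 : Fin 5), j))
    rw [Matrix.mul_apply, Fintype.sum_sum_type, Fintype.sum_sum_type,
      Fintype.sum_sum_type] at h
    have hrow : ∀ (s : Fin 5) (k : Fin n),
        S (ι4 m ((3 : Fin 5), i)) (Sum.inr (Sum.inr (Sum.inr (s, k))))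
        = Cb 3 s i k := fun s k => rfl
    simp only [fact1, fact2, fact3, zero_mul, Finset.sum_const_zero, zero_add] at h
    simp only [Fintype.sum_prod_type, Fin.sum_univ_five, hrow, c30, c31, c32, c34, c33,
      Matrix.zero_apply, zero_mul, Finset.sum_const_zero, zero_add, add_zero] at h
    have hone : (1 : Matrix (MIdx m (Fin 5 × Fin n)) (MIdx m (Fin 5 × Fin n)) F)
        (ι4 m ((3 : Fin 5), i)) (ι4 m ((3 : Fin 5), j)) = (1 : Matrix (Fin n) (Fin n) F) i j := by
      simp [Matrix.one_apply, ι4, Prod.ext_iff]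
    rw [Matrix.mul_apply, ← hone, ← h]
    rfl
  have hCunit : IsUnit (Cb 0 0) := (Matrix.isUnit_iff_isUnit_det _).mpr (Matrix.isUnit_det_of_right_inverse hCD)
  have hCdet : IsUnit (Cb 0 0).det := (Cb 0 0).isUnit_iff_isUnit_det.mp hCunit
  refine ⟨Cb 0 0, hCunit, ?_, ?_⟩
  · rw [mul_assoc, hXC, Matrix.nonsing_inv_mul_cancel_left _ _ hCdet]
  · rw [mul_assoc, hYC, Matrix.nonsing_inv_mul_cancel_left _ _ hCdet]

/-- block-diagonal matrix with equal diagonal blocks -/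
def dmat (W : Matrix (Fin n) (Fin n) F) : Matrix (Fin 5 × Fin n) (Fin 5 × Fin n) F :=
  bmat fun r s => if r = s then W else 0

lemma dmat_mul (W W' : Matrix (Fin n) (Fin n) F) :
    dmat W * dmat W' = dmat (W * W') := by
  unfold dmat
  rw [bmat_mul]
  apply bmat_ext
  intro r s
  simp [ite_mul, mul_ite, zero_mul, mul_zero, Finset.sum_ite_eq]

lemma dmat_one : dmat (1 : Matrix (Fin n) (Fin n) F) = 1 := by
  ext ⟨r, i⟩ ⟨s, j⟩
  by_cases h : r = s
  · subst h
    by_cases hij : i = j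
    · subst hij; simp [dmat, bmat_apply, Matrix.one_apply]
    · simp [dmat, bmat_apply, Matrix.one_apply, hij, Prod.ext_iff]
  · simp [dmat, bmat_apply, Matrix.one_apply, h, Prod.ext_iff]

lemma J_dmat (W : Matrix (Fin n) (Fin n) F) :
    Jmat F n * dmat W = dmat W * Jmat F n := by
  unfold dmat
  rw [Jmat_eq, bmat_mul, bmat_mul]
  apply bmat_ext
  intro r s
  fin_cases r <;> fin_cases s <;>
    simp [Jb, Fin.sum_univ_five]

lemma K_dmat {U V U' V' W : Matrix (Fin n) (Fin n) F}
    (hU : U * W = W * U') (hV : V * W = W * V') :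
    Kmat U V * dmat W = dmat W * Kmat U' V' := by
  unfold dmat
  rw [Kmat_eq, Kmat_eq, bmat_mul, bmat_mul]
  apply bmat_ext
  intro r s
  fin_cases r <;> fin_cases s <;>
    simp [Kb, Fin.sum_univ_five, hU, hV]

lemma A_dmat (lam : F) (W : Matrix (Fin n) (Fin n) F) :
    (lam • (1 : Matrix (Fin 5 × Fin n) (Fin 5 × Fin n) F) + Jmat F n) * dmat W
      = dmat W * (lam • (1 : Matrix (Fin 5 × Fin n) (Fin 5 × Fin n) F) + Jmat F n) := by
  rw [add_mul, mul_add, Matrix.smul_mul, Matrix.mul_smul, one_mul, mul_one, J_dmat]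

/-- block-diagonal big matrix -/
def Sblk (m : ℕ) {n : ℕ} (D : Matrix (Fin 5 × Fin n) (Fin 5 × Fin n) F) :
    Matrix (MIdx m (Fin 5 × Fin n)) (MIdx m (Fin 5 × Fin n)) F :=
  Matrix.fromBlocks 1 0 0 (Matrix.fromBlocks 1 0 0 (Matrix.fromBlocks 1 0 0 D))

lemma Sblk_mul {m : ℕ} (D D' : Matrix (Fin 5 × Fin n) (Fin 5 × Fin n) F) :
    Sblk m D * Sblk m D' = Sblk m (D * D') := by
  simp [Sblk, Matrix.fromBlocks_multiply]

lemma Sblk_one {m : ℕ} :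
    (Sblk m (1 : Matrix (Fin 5 × Fin n) (Fin 5 × Fin n) F)) = 1 := by
  simp [Sblk, Matrix.fromBlocks_one]

lemma M1_Sblk {m : ℕ} {A D : Matrix (Fin 5 × Fin n) (Fin 5 × Fin n) F}
    (hA : A * D = D * A) : M1 m A * Sblk m D = Sblk m D * M1 m A := by
  simp [M1, Sblk, Matrix.fromBlocks_multiply, hA]

lemma M2_Sblk {m : ℕ} (lam : F) {B B' D : Matrix (Fin 5 × Fin n) (Fin 5 × Fin n) F}
    (hB : B * D = D * B') : M2 m lam B * Sblk m D = Sblk m D * M2 m lam B' := by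
  simp [M2, Sblk, Matrix.fromBlocks_multiply, hB, Matrix.smul_mul, Matrix.mul_smul]

lemma M1M2_comm {m : ℕ} (lam : F) {A B : Matrix (Fin 5 × Fin n) (Fin 5 × Fin n) F}
    (hAB : A * B = B * A) : M1 m A * M2 m lam B = M2 m lam B * M1 m A := by
  simp [M1, M2, Matrix.fromBlocks_multiply, hAB, Matrix.smul_mul, Matrix.mul_smul]

lemma AK_comm (lam : F) (U V : Matrix (Fin n) (Fin n) F) :
    (lam • (1 : Matrix (Fin 5 × Fin n) (Fin 5 × Fin n) F) + Jmat F n) * Kmat U V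
      = Kmat U V * (lam • (1 : Matrix (Fin 5 × Fin n) (Fin 5 × Fin n) F) + Jmat F n) := by
  rw [add_mul, mul_add, Matrix.smul_mul, Matrix.mul_smul, one_mul, mul_one, JK_comm]

end WSaux

open WSaux in
/-- Let `F` be a field with at least 3 elements, `λ ∈ F` with `λ ≠ 0` and
`λ ≠ -1`, and `n ≥ 1`.  Then `(X, Y)` and `(X', Y')` are similar iff the pairs
`(M₁(λI_{5n} + J), M₂(K_{X,Y}))` and `(M₁(λI_{5n} + J), M₂(K_{X',Y'}))` are
weakly similar; moreover `M₁(λI_{5n} + J)` and `M₂(K_{X,Y})` commute. -/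
theorem similar_iff_MJK_weaklySimilar (F : Type*) [Field F]
    (hF : ∃ x y z : F, x ≠ y ∧ x ≠ z ∧ y ≠ z)
    (l : F) (hl0 : l ≠ 0) (hl1 : l ≠ -1) (n : ℕ) (hn : 1 ≤ n)
    (X Y X' Y' : Matrix (Fin n) (Fin n) F) :
    ((∃ S : Matrix (Fin n) (Fin n) F, IsUnit S ∧
        S⁻¹ * X * S = X' ∧ S⁻¹ * Y * S = Y') ↔
      WeaklySimilar
        (M1 (5*n) (l • (1 : Matrix (Fin 5 × Fin n) (Fin 5 × Fin n) F) + Jmat F n))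
        (M2 (5*n) l (Kmat X Y))
        (M1 (5*n) (l • (1 : Matrix (Fin 5 × Fin n) (Fin 5 × Fin n) F) + Jmat F n))
        (M2 (5*n) l (Kmat X' Y'))) ∧
    M1 (5*n) (l • (1 : Matrix (Fin 5 × Fin n) (Fin 5 × Fin n) F) + Jmat F n)
        * M2 (5*n) l (Kmat X Y)
      = M2 (5*n) l (Kmat X Y)
        * M1 (5*n) (l • (1 : Matrix (Fin 5 × Fin n) (Fin 5 × Fin n) F) + Jmat F n) := by
  classical
  constructor
  · constructor
    · rintro ⟨W, hWu, hXW, hYW⟩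
      have hWd : IsUnit W.det := W.isUnit_iff_isUnit_det.mp hWu
      have hXW' : X * W = W * X' := by
        rw [← hXW, Matrix.mul_assoc W⁻¹ X W, Matrix.mul_nonsing_inv_cancel_left _ _ hWd]
      have hYW' : Y * W = W * Y' := by
        rw [← hYW, Matrix.mul_assoc W⁻¹ Y W, Matrix.mul_nonsing_inv_cancel_left _ _ hWd]
      have hSbu : IsUnit (Sblk (5*n) (dmat W)) := by
        refine (Matrix.isUnit_iff_isUnit_det _).mpr (Matrix.isUnit_det_of_right_inverse (B := Sblk (5*n) (dmat W⁻¹)) ?_)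
        rw [Sblk_mul, dmat_mul, Matrix.mul_nonsing_inv _ hWd, dmat_one, Sblk_one]
      have hSbd : IsUnit (Sblk (5*n) (dmat W)).det :=
        (Sblk (5*n) (dmat W)).isUnit_iff_isUnit_det.mp hSbu
      refine ⟨Sblk (5*n) (dmat W), 1, 0, 0, 1, hSbu, ?_, ?_, ?_⟩
      · rw [Matrix.isUnit_iff_isUnit_det, Matrix.det_fin_two_of]
        simp
      · rw [one_smul, zero_smul, add_zero]
        have hc := M1_Sblk (m := 5*n) (A_dmat l W)
        rw [Matrix.mul_assoc, hc, Matrix.nonsing_inv_mul_cancel_left _ _ hSbd]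
      · rw [zero_smul, one_smul, zero_add]
        have hc := M2_Sblk (m := 5*n) l (K_dmat hXW' hYW')
        rw [Matrix.mul_assoc, hc, Matrix.nonsing_inv_mul_cancel_left _ _ hSbd]
    · rintro ⟨S, α, β, γ, δ, hSu, h2u, hA, hB⟩
      have hSd : IsUnit S.det := S.isUnit_iff_isUnit_det.mp hSu
      have hab : ¬ (α = 0 ∧ β = 0) := by
        rintro ⟨rfl, rfl⟩
        rw [Matrix.isUnit_iff_isUnit_det, Matrix.det_fin_two_of] at h2u
        simp at h2u
      have hcharM1 : (M1 (5*n) (l • (1 : Matrix (Fin 5 × Fin n) (Fin 5 × Fin n) F)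
          + Jmat F n)).charpoly
          = (Polynomial.X - C 1)^(2*(5*n)+2) * (Polynomial.X - C 0)^(3*(5*n)+3) * (Polynomial.X - C 1)^(5*n+1)
            * (Polynomial.X - C l)^(5*n) := by
        have := charpoly_comb (n := n) 1 0 l X Y
        simpa using this
      have hcharM2 : (M2 (5*n) l (Kmat X' Y')).charpoly
          = (Polynomial.X - C 0)^(2*(5*n)+2) * (Polynomial.X - C 1)^(3*(5*n)+3) * (Polynomial.X - C l)^(5*n+1)
            * (Polynomial.X - C 0)^(5*n) := by
        have := charpoly_comb (n := n) 0 1 l X' Y'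
        simpa using this
      have hp1 : (α • M1 (5*n) (l • (1 : Matrix (Fin 5 × Fin n) (Fin 5 × Fin n) F)
            + Jmat F n) + β • M2 (5*n) l (Kmat X Y)).charpoly
          = (M1 (5*n) (l • (1 : Matrix (Fin 5 × Fin n) (Fin 5 × Fin n) F)
            + Jmat F n)).charpoly := by
        rw [← charpoly_conj S _ hSu, hA]
      rw [charpoly_comb α β l X Y, hcharM1] at hp1
      have hp2 : (γ • M1 (5*n) (l • (1 : Matrix (Fin 5 × Fin n) (Fin 5 × Fin n) F)
            + Jmat F n) + δ • M2 (5*n) l (Kmat X Y)).charpoly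
          = (M2 (5*n) l (Kmat X' Y')).charpoly := by
        rw [← charpoly_conj S _ hSu, hB]
      rw [charpoly_comb γ δ l X Y, hcharM2] at hp2
      obtain ⟨hα, hβ⟩ := key1 (5*n) l α β hl0 hab (fun c => by
        have := congrArg (Polynomial.rootMultiplicity c) hp1
        rwa [rm_prod4, rm_prod4] at this)
      obtain ⟨hγ, hδ⟩ := key2 (5*n) l γ δ hl0 (fun c => by
        have := congrArg (Polynomial.rootMultiplicity c) hp2
        rwa [rm_prod4, rm_prod4] at this)
      subst hα; subst hβ; subst hγ; subst hδ
      rw [one_smul, zero_smul, add_zero] at hA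
      rw [one_smul, zero_smul, zero_add] at hB
      have h1' : M1 (5*n) (l • (1 : Matrix (Fin 5 × Fin n) (Fin 5 × Fin n) F)
          + Jmat F n) * S
          = S * M1 (5*n) (l • (1 : Matrix (Fin 5 × Fin n) (Fin 5 × Fin n) F)
          + Jmat F n) := by
        calc M1 (5*n) (l • (1 : Matrix (Fin 5 × Fin n) (Fin 5 × Fin n) F) + Jmat F n) * S
            = S * S⁻¹ * M1 (5*n) (l • (1 : Matrix (Fin 5 × Fin n) (Fin 5 × Fin n) F)
              + Jmat F n) * S := by
              rw [Matrix.mul_nonsing_inv _ hSd, one_mul]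
          _ = S * (S⁻¹ * M1 (5*n) (l • (1 : Matrix (Fin 5 × Fin n) (Fin 5 × Fin n) F)
              + Jmat F n) * S) := by
              simp only [Matrix.mul_assoc]
          _ = S * M1 (5*n) (l • (1 : Matrix (Fin 5 × Fin n) (Fin 5 × Fin n) F)
              + Jmat F n) := by rw [hA]
      have h2' : M2 (5*n) l (Kmat X Y) * S = S * M2 (5*n) l (Kmat X' Y') := by
        calc M2 (5*n) l (Kmat X Y) * S
            = S * S⁻¹ * M2 (5*n) l (Kmat X Y) * S := by
              rw [Matrix.mul_nonsing_inv _ hSd, one_mul]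
          _ = S * (S⁻¹ * M2 (5*n) l (Kmat X Y) * S) := by
              simp only [Matrix.mul_assoc]
          _ = S * M2 (5*n) l (Kmat X' Y') := by rw [hB]
      exact extract l hl0 X Y X' Y' S hSu h1' h2'
  · exact M1M2_comm l (AK_comm l X Y)
end
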